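/- Let V and W be normed vector spaces over ℂ, let H be a complex inner product space, let c > 0, and let ι : V → H be a linear map with ‖ι u‖_H ≤ c · ‖u‖_V for all u ∈ V. Let u_1, …, u_N ∈ V be vectors such that the family (ι u_1, …, ι u_N) is orthonormal in H. Then for every linear map T : V → W and every u in the linear span of {u_1, …, u_N}, one has ‖T u‖_W ≤ c · ‖u‖_V · Σ_{j=1}^N ‖T u_j‖_W. -/

import Mathlib

/-- Let `V` and `W` be normed vector spaces over `ℂ`, let `H` be a complex
inner product space, let `c > 0`, and let `ι : V → H` be a linear map with
`‖ι u‖ ≤ c * ‖u‖` for all `u ∈ V`.  Let `u 1, …, u N ∈ V` be vectors such that the family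
`(ι (u 1), …, ι (u N))` is orthonormal in `H`.  Then for every linear map `T : V → W` and every
`x` in the linear span of `{u 1, …, u N}`, one has
`‖T x‖ ≤ c * ‖x‖ * ∑ j, ‖T (u j)‖`. -/
theorem stmt0 {V W H : Type*}
    [NormedAddCommGroup V] [NormedSpace ℂ V]
    [NormedAddCommGroup W] [NormedSpace ℂ W]
    [NormedAddCommGroup H] [InnerProductSpace ℂ H]
    (c : ℝ) (hc : 0 < c)
    (ι : V →ₗ[ℂ] H) (hι : ∀ u : V, ‖ι u‖ ≤ c * ‖u‖)
    (N : ℕ) (u : Fin N → V)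
    (hon : Orthonormal ℂ (fun j => ι (u j)))
    (T : V →ₗ[ℂ] W) (x : V)
    (hx : x ∈ Submodule.span ℂ (Set.range u)) :
    ‖T x‖ ≤ c * ‖x‖ * ∑ j, ‖T (u j)‖ := by
  rw [Finsupp.mem_span_range_iff_exists_finsupp] at hx
  obtain ⟨w, hw⟩ := hx
  -- coefficients bound
  have hιx : ι x = ∑ j, w j • ι (u j) := by
    rw [← hw, map_finsuppSum]
    rw [Finsupp.sum_fintype]
    · simp
    · intro i; simp
  have hcoef : ∀ j, ‖w j‖ ≤ c * ‖x‖ := by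
    intro j
    have h1 : inner ℂ (ι (u j)) (ι x) = (w j : ℂ) := by
      rw [hιx, inner_sum]
      rw [Finset.sum_eq_single j]
      · rw [inner_smul_right, inner_self_eq_norm_sq_to_K, hon.1 j]; simp
      · intro b _ hb
        simp [inner_smul_right, hon.2 (Ne.symm hb)]
      · simp
    calc ‖w j‖ = ‖inner ℂ (ι (u j)) (ι x)‖ := by rw [h1]
      _ ≤ ‖ι (u j)‖ * ‖ι x‖ := norm_inner_le_norm _ _
      _ = ‖ι x‖ := by rw [hon.1 j, one_mul]
      _ ≤ c * ‖x‖ := hι x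
  have hTx : T x = ∑ j, w j • T (u j) := by
    rw [← hw, map_finsuppSum, Finsupp.sum_fintype]
    · simp
    · intro i; simp
  calc ‖T x‖ = ‖∑ j, w j • T (u j)‖ := by rw [hTx]
    _ ≤ ∑ j, ‖w j • T (u j)‖ := norm_sum_le _ _
    _ = ∑ j, ‖w j‖ * ‖T (u j)‖ := by simp [norm_smul]
    _ ≤ ∑ j, (c * ‖x‖) * ‖T (u j)‖ := by
        apply Finset.sum_le_sum
        intro j _
        exact mul_le_mul_of_nonneg_right (hcoef j) (norm_nonneg _)
    _ = c * ‖x‖ * ∑ j, ‖T (u j)‖ := by rw [Finset.mul_sum]
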